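/- arXiv:1603.00784 — 3 statements merged into one kernel-verified Lean document; each statement's English description precedes it below -/
import Mathlib

section
/- Let (Z_t)_{t∈ℤ} be an i.i.d. sequence of random vectors in ℝ^K with mean zero and positive definite covariance matrix Σ. Let (Ψ_i)_{i∈ℤ} be real K×K matrices such that for every t the two-sided series X_t := ∑_{i∈ℤ} Ψ_i Z_{t−i} converges almost surely, and such that for every fixed index i₀ the partial series ∑_{i∈ℤ, i≠i₀} Ψ_i Z_{t−i} also converges almost surely. If for all integers s > t the random vector Z_s is independent of X_t, then Ψ_i = 0 for every i < 0. -/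
open MeasureTheory ProbabilityTheory Filter Matrix
open scoped ComplexConjugate Topology

section Helpers

variable {K : ℕ}

lemma dotP_continuous (u : Fin K → ℝ) : Continuous fun x : Fin K → ℝ => u ⬝ᵥ x :=
  continuous_finset_sum _ fun i _ => (continuous_const.mul (continuous_apply i))

lemma dotP_continuous' (x : Fin K → ℝ) : Continuous fun u : Fin K → ℝ => u ⬝ᵥ x :=
  continuous_finset_sum _ fun i _ => ((continuous_apply i).mul continuous_const)

lemma dotP_measurable (u : Fin K → ℝ) : Measurable fun x : Fin K → ℝ => u ⬝ᵥ x :=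
  (dotP_continuous u).measurable

lemma eC_continuous : Continuous fun r : ℝ => Complex.exp ((r : ℂ) * Complex.I) :=
  (Complex.continuous_ofReal.mul continuous_const).cexp

lemma eC_norm (r : ℝ) : ‖Complex.exp ((r : ℂ) * Complex.I)‖ = 1 := by
  rw [Complex.norm_exp_ofReal_mul_I]

/-- characteristic function of a measure on `Fin K → ℝ` -/
noncomputable def mvCF (μ : Measure (Fin K → ℝ)) (u : Fin K → ℝ) : ℂ :=
  ∫ x, Complex.exp (((u ⬝ᵥ x : ℝ) : ℂ) * Complex.I) ∂μ

lemma mvCF_integrable (μ : Measure (Fin K → ℝ)) [IsFiniteMeasure μ] (u : Fin K → ℝ) :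
    Integrable (fun x => Complex.exp (((u ⬝ᵥ x : ℝ) : ℂ) * Complex.I)) μ := by
  refine (integrable_const (1 : ℝ)).mono'
    ((eC_continuous.comp (dotP_continuous u)).aestronglyMeasurable) ?_
  exact ae_of_all _ fun x => le_of_eq (eC_norm _)

lemma mvCF_zero (μ : Measure (Fin K → ℝ)) [IsProbabilityMeasure μ] : mvCF μ 0 = 1 := by
  simp [mvCF]

lemma mvCF_neg (μ : Measure (Fin K → ℝ)) (u : Fin K → ℝ) :
    mvCF μ (-u) = conj (mvCF μ u) := by
  rw [mvCF, mvCF, ← integral_conj]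
  congr 1
  funext x
  rw [← Complex.exp_conj]
  congr 1
  simp [neg_dotProduct]

lemma mvCF_continuous (μ : Measure (Fin K → ℝ)) [IsProbabilityMeasure μ] :
    Continuous (mvCF μ) := by
  refine continuous_of_dominated
    (fun u => (eC_continuous.comp (dotP_continuous u)).aestronglyMeasurable)
    (fun u => ae_of_all _ fun x => le_of_eq (eC_norm _)) (integrable_const 1) ?_
  exact ae_of_all _ fun x => eC_continuous.comp (dotP_continuous' x)

lemma mvCF_exp_ae_const (μ : Measure (Fin K → ℝ)) [IsProbabilityMeasure μ] (a : Fin K → ℝ)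
    (h : ∀ v, mvCF μ (v + a) = mvCF μ v * mvCF μ a) :
    ∀ᵐ x ∂μ, Complex.exp (((a ⬝ᵥ x : ℝ) : ℂ) * Complex.I) = mvCF μ a := by
  set c := mvCF μ a with hc
  have h1 : conj c * c = 1 := by
    have := h (-a)
    rw [neg_add_cancel, mvCF_zero, mvCF_neg] at this
    exact this.symm
  have hnsq : Complex.normSq c = 1 := by
    have h2 : (Complex.normSq c : ℂ) = 1 := by rw [Complex.normSq_eq_conj_mul_self]; exact h1
    exact_mod_cast h2
  have habs : ‖c‖ = 1 := by
    have := Complex.sq_norm c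
    rw [hnsq] at this
    nlinarith [norm_nonneg c]
  -- define nonneg integrand
  set g : (Fin K → ℝ) → ℝ :=
    fun x => 1 - (conj c * Complex.exp (((a ⬝ᵥ x : ℝ) : ℂ) * Complex.I)).re with hg
  have hnormc : ‖conj c‖ = 1 := by
    rw [RCLike.norm_conj]; exact habs
  have hnorm : ∀ x, ‖conj c * Complex.exp (((a ⬝ᵥ x : ℝ) : ℂ) * Complex.I)‖ = 1 := by
    intro x
    rw [norm_mul, hnormc, eC_norm, one_mul]
  have hgnonneg : ∀ x, 0 ≤ g x := by
    intro x
    have := Complex.re_le_norm (conj c * Complex.exp (((a ⬝ᵥ x : ℝ) : ℂ) * Complex.I))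
    rw [hnorm x] at this
    show (0:ℝ) ≤ 1 - _
    linarith
  have hint : Integrable (fun x => conj c * Complex.exp (((a ⬝ᵥ x : ℝ) : ℂ) * Complex.I)) μ :=
    (mvCF_integrable μ a).const_mul _
  have hintre : Integrable
      (fun x => (conj c * Complex.exp (((a ⬝ᵥ x : ℝ) : ℂ) * Complex.I)).re) μ := by
    simpa [RCLike.re_to_complex] using hint.re
  have hgint : Integrable g μ := (integrable_const (1 : ℝ)).sub hintre
  have hgzero : ∫ x, g x ∂μ = 0 := by
    show ∫ x, (1 - (conj c * Complex.exp (((a ⬝ᵥ x : ℝ) : ℂ) * Complex.I)).re) ∂μ = 0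
    rw [integral_sub (integrable_const 1) hintre, integral_const]
    simp only [probReal_univ, one_smul]
    have : ∫ x, (conj c * Complex.exp (((a ⬝ᵥ x : ℝ) : ℂ) * Complex.I)).re ∂μ
        = (∫ x, conj c * Complex.exp (((a ⬝ᵥ x : ℝ) : ℂ) * Complex.I) ∂μ).re := by
      simpa using (integral_re hint)
    rw [this, integral_const_mul]
    have hcint : (∫ x, Complex.exp (((a ⬝ᵥ x : ℝ) : ℂ) * Complex.I) ∂μ) = c := rfl
    rw [hcint]
    have : (conj c * c).re = 1 := by rw [h1]; simp
    rw [this]; ring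
  have hae : g =ᵐ[μ] 0 := (integral_eq_zero_iff_of_nonneg_ae
    (ae_of_all _ hgnonneg) hgint).mp hgzero
  filter_upwards [hae] with x hx
  have hre : (conj c * Complex.exp (((a ⬝ᵥ x : ℝ) : ℂ) * Complex.I)).re = 1 := by
    simp only [hg, Pi.zero_apply] at hx
    linarith [hx]
  set z := conj c * Complex.exp (((a ⬝ᵥ x : ℝ) : ℂ) * Complex.I) with hz
  have hzabs : ‖z‖ = 1 := by exact hnorm x
  have hznsq : Complex.normSq z = 1 := by rw [← Complex.sq_norm, hzabs]; norm_num
  rw [Complex.normSq_apply] at hznsq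
  have him : z.im = 0 := by nlinarith
  have hzone : z = 1 := by
    apply Complex.ext <;> simp [hre, him]
  -- multiply by c
  have : c * z = c := by rw [hzone, mul_one]
  rw [hz, ← mul_assoc, Complex.mul_conj, hnsq] at this
  rw [Complex.ofReal_one, one_mul] at this
  exact this

end Helpers


section Helpers

variable {K : ℕ}

lemma mulVec_continuous' (M : Matrix (Fin K) (Fin K) ℝ) :
    Continuous fun v : Fin K → ℝ => M *ᵥ v := by
  show Continuous fun v : Fin K → ℝ => fun i => (fun j => M i j) ⬝ᵥ v
  exact continuous_pi fun i => continuous_finset_sum _ fun j _ =>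
    continuous_const.mul (continuous_apply j)

lemma mulVec_measurable' (M : Matrix (Fin K) (Fin K) ℝ) :
    Measurable fun v : Fin K → ℝ => M *ᵥ v :=
  (mulVec_continuous' M).measurable

/-- Construction of a limit `Y` of the partial sums `W n`, measurable and independent of `Z s`,
assuming each `W n` is measurable w.r.t. the σ-algebra generated by the `Z u`, `u ≠ s`. -/
lemma aux_Y {Ω : Type*} [m0 : MeasurableSpace Ω] (P : Measure Ω) [IsProbabilityMeasure P]
    (Z : ℤ → Ω → (Fin K → ℝ)) (hZmeas : ∀ t, Measurable (Z t))
    (hZindep : iIndepFun Z P) (s : ℤ)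
    (W : ℕ → Ω → (Fin K → ℝ))
    (hW : ∀ n, Measurable[⨆ u ∈ ({s}ᶜ : Set ℤ), MeasurableSpace.comap (Z u) inferInstance] (W n)) :
    ∃ Y : Ω → (Fin K → ℝ), Measurable Y ∧ IndepFun (Z s) Y P ∧
      ∀ ω, (∃ c, Tendsto (fun n => W n ω) atTop (𝓝 c)) →
        Tendsto (fun n => W n ω) atTop (𝓝 (Y ω)) := by
  classical
  set 𝓖 : MeasurableSpace Ω :=
    ⨆ u ∈ ({s}ᶜ : Set ℤ), MeasurableSpace.comap (Z u) inferInstance with h𝓖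
  have hGle : 𝓖 ≤ m0 := by
    rw [h𝓖]
    refine iSup_le fun u => iSup_le fun _ => ?_
    exact measurable_iff_comap_le.mp (hZmeas u)
  have hCmeas : MeasurableSet[𝓖] {ω | ∃ c, Tendsto (fun n => W n ω) atTop (𝓝 c)} :=
    measurableSet_exists_tendsto hW
  set Y : Ω → (Fin K → ℝ) :=
    fun ω => if h : ∃ c, Tendsto (fun n => W n ω) atTop (𝓝 c) then h.choose else 0 with hY
  have hYtend : ∀ ω, (∃ c, Tendsto (fun n => W n ω) atTop (𝓝 c)) →
      Tendsto (fun n => W n ω) atTop (𝓝 (Y ω)) := by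
    intro ω h
    simp only [hY, dif_pos h]
    exact h.choose_spec
  have hYG : Measurable[𝓖] Y := by
    set W' : ℕ → Ω → (Fin K → ℝ) :=
      fun n ω => if ω ∈ {ω | ∃ c, Tendsto (fun n => W n ω) atTop (𝓝 c)}
        then W n ω else 0 with hW'
    have hW'G : ∀ n, Measurable[𝓖] (W' n) := fun n =>
      Measurable.ite hCmeas (hW n) measurable_const
    refine measurable_of_tendsto_metrizable hW'G (tendsto_pi_nhds.mpr fun ω => ?_)
    by_cases h : ∃ c, Tendsto (fun n => W n ω) atTop (𝓝 c)
    · have heq : ∀ n, W' n ω = W n ω := fun n => if_pos h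
      exact (hYtend ω h).congr fun n => (heq n).symm
    · have heq : ∀ n, W' n ω = 0 := fun n => if_neg h
      have hy0 : Y ω = 0 := dif_neg h
      rw [hy0]
      exact tendsto_const_nhds.congr fun n => (heq n).symm
  refine ⟨Y, hYG.mono hGle le_rfl, ?_, hYtend⟩
  have hIndep : Indep (⨆ u ∈ ({s} : Set ℤ), MeasurableSpace.comap (Z u) inferInstance) 𝓖 P := by
    rw [h𝓖]
    exact indep_biSup_compl (fun u => measurable_iff_comap_le.mp (hZmeas u))
      hZindep.iIndep ({s} : Set ℤ)
  rw [IndepFun_iff_Indep]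
  refine indep_of_indep_of_le_right (indep_of_indep_of_le_left hIndep ?_) ?_
  · exact le_biSup (fun u => MeasurableSpace.comap (Z u) inferInstance) (Set.mem_singleton s)
  · exact measurable_iff_comap_le.mp hYG

end Helpers


section Helpers2

variable {K : ℕ}

lemma exp_reassoc (A : Matrix (Fin K) (Fin K) ℝ) (u v z y : Fin K → ℝ) :
    Complex.exp (((v ⬝ᵥ z : ℝ) : ℂ) * Complex.I)
        * Complex.exp (((u ⬝ᵥ (A *ᵥ z + y) : ℝ) : ℂ) * Complex.I)
      = Complex.exp ((((v + Aᵀ *ᵥ u) ⬝ᵥ z : ℝ) : ℂ) * Complex.I)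
        * Complex.exp (((u ⬝ᵥ y : ℝ) : ℂ) * Complex.I) := by
  rw [← Complex.exp_add, ← Complex.exp_add]
  congr 1
  have h1 : u ⬝ᵥ (A *ᵥ z + y) = (Aᵀ *ᵥ u) ⬝ᵥ z + u ⬝ᵥ y := by
    rw [dotProduct_add, Matrix.dotProduct_mulVec, ← Matrix.mulVec_transpose]
  have h2 : (v + Aᵀ *ᵥ u) ⬝ᵥ z = v ⬝ᵥ z + (Aᵀ *ᵥ u) ⬝ᵥ z := add_dotProduct _ _ _
  rw [h1, h2]
  push_cast
  ring

end Helpers2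


/-- If an i.i.d. mean-zero sequence `(Z t)` with positive definite covariance `S`
gives a two-sided moving-average representation `X t = ∑_{i ∈ ℤ} Ψ i *ᵥ Z (t - i)` (converging
almost surely, and still converging after removing any single term), and every innovation `Z s`
is independent of every preceding value `X t` (`t < s`), then all anticipative coefficients
vanish: `Ψ i = 0` for `i < 0`. -/
theorem two_sided_representation_indep_implies_causal
    {Ω : Type*} [MeasurableSpace Ω] (P : Measure Ω) [IsProbabilityMeasure P]
    (K : ℕ) (Z : ℤ → Ω → (Fin K → ℝ))
    (hZmeas : ∀ t, Measurable (Z t))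
    (hZindep : iIndepFun Z P)
    (hZident : ∀ s t : ℤ, P.map (Z s) = P.map (Z t))
    (S : Matrix (Fin K) (Fin K) ℝ) (hS : S.PosDef)
    (hmean : ∀ t i, ∫ ω, Z t ω i ∂P = 0)
    (hcov : ∀ t i j, ∫ ω, Z t ω i * Z t ω j ∂P = S i j)
    (Ψ : ℤ → Matrix (Fin K) (Fin K) ℝ)
    (X : ℤ → Ω → (Fin K → ℝ))
    (hX : ∀ t : ℤ, ∀ᵐ ω ∂P,
      Tendsto (fun n : ℕ => ∑ i ∈ Finset.Icc (-(n : ℤ)) (n : ℤ), (Ψ i) *ᵥ (Z (t - i) ω))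
        atTop (nhds (X t ω)))
    (hX' : ∀ (i₀ t : ℤ), ∀ᵐ ω ∂P, ∃ y : Fin K → ℝ,
      Tendsto
        (fun n : ℕ => ∑ i ∈ (Finset.Icc (-(n : ℤ)) (n : ℤ)).erase i₀, (Ψ i) *ᵥ (Z (t - i) ω))
        atTop (nhds y))
    (hindep : ∀ s t : ℤ, t < s → IndepFun (Z s) (X t) P) :
    ∀ i : ℤ, i < 0 → Ψ i = 0 := by
  classical
  intro i₀ hi₀
  set s : ℤ := 0 - i₀ with hs_def
  have hs_pos : (0 : ℤ) < s := by omega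
  set A : Matrix (Fin K) (Fin K) ℝ := Ψ i₀ with hA
  set Sn : ℕ → Ω → (Fin K → ℝ) :=
    fun n ω => ∑ i ∈ (Finset.Icc (-(n : ℤ)) (n : ℤ)).erase i₀, (Ψ i) *ᵥ (Z (0 - i) ω) with hSn
  set Fn : ℕ → Ω → (Fin K → ℝ) :=
    fun n ω => ∑ i ∈ Finset.Icc (-(n : ℤ)) (n : ℤ), (Ψ i) *ᵥ (Z (0 - i) ω) with hFn
  have hSnG : ∀ n,
      Measurable[⨆ u ∈ ({s}ᶜ : Set ℤ), MeasurableSpace.comap (Z u) inferInstance] (Sn n) := by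
    intro n
    refine Finset.measurable_sum _ fun i hi => ?_
    have hne : (0 : ℤ) - i ≠ s := by
      have := Finset.ne_of_mem_erase hi
      omega
    have hZG : Measurable[⨆ u ∈ ({s}ᶜ : Set ℤ), MeasurableSpace.comap (Z u) inferInstance]
        (Z (0 - i)) := by
      rw [measurable_iff_comap_le]
      exact le_biSup (fun u => MeasurableSpace.comap (Z u) inferInstance)
        (Set.mem_compl_singleton_iff.mpr hne)
    exact (mulVec_measurable' (Ψ i)).comp hZG
  obtain ⟨Y, hYmeas, hZYindep, hYtend⟩ := aux_Y P Z hZmeas hZindep s Sn hSnG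
  have hFnMeas : ∀ n, Measurable (Fn n) := fun n =>
    Finset.measurable_sum _ fun i _ => (mulVec_measurable' (Ψ i)).comp (hZmeas _)
  -- a.e. decomposition X 0 = A Z s + Y
  have hXeq : X 0 =ᵐ[P] fun ω => A *ᵥ Z s ω + Y ω := by
    filter_upwards [hX 0, hX' i₀ 0] with ω hF hS'
    have hcon : ∃ c, Tendsto (fun n => Sn n ω) atTop (𝓝 c) := hS'
    have hYt := hYtend ω hcon
    have hFt : Tendsto (fun n => Fn n ω) atTop (𝓝 (X 0 ω)) := hF
    have hsub : Tendsto (fun n => Fn n ω - Sn n ω) atTop (𝓝 (X 0 ω - Y ω)) := hFt.sub hYt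
    have hev : (fun n => Fn n ω - Sn n ω) =ᶠ[atTop] fun _ => A *ᵥ Z s ω := by
      filter_upwards [eventually_ge_atTop i₀.natAbs] with n hn
      have hn' : (i₀.natAbs : ℤ) ≤ (n : ℤ) := by exact_mod_cast hn
      have hmem : i₀ ∈ Finset.Icc (-(n : ℤ)) (n : ℤ) := by
        simp only [Finset.mem_Icc]
        omega
      have hsum := Finset.add_sum_erase _ (fun i => (Ψ i) *ᵥ (Z (0 - i) ω)) hmem
      have hFS : Fn n ω = A *ᵥ Z s ω + Sn n ω := by
        rw [hFn, hSn, hA, hs_def]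
        exact hsum.symm
      rw [hFS]
      abel
    have hlim : X 0 ω - Y ω = A *ᵥ Z s ω :=
      tendsto_nhds_unique (hsub.congr' hev) tendsto_const_nhds
    exact sub_eq_iff_eq_add.mp hlim
  have hXmeas : AEMeasurable (X 0) P :=
    aemeasurable_of_tendsto_metrizable_ae atTop (fun n => (hFnMeas n).aemeasurable) (hX 0)
  -- measures
  set μ : Measure (Fin K → ℝ) := P.map (Z s) with hμ_def
  set ν : Measure (Fin K → ℝ) := P.map Y with hν_def
  set ρ : Measure (Fin K → ℝ) := P.map (X 0) with hρ_def
  haveI : IsProbabilityMeasure μ := by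
    rw [hμ_def]; exact Measure.isProbabilityMeasure_map (hZmeas s).aemeasurable
  haveI : IsProbabilityMeasure ν := by
    rw [hν_def]; exact Measure.isProbabilityMeasure_map hYmeas.aemeasurable
  haveI : IsProbabilityMeasure ρ := by
    rw [hρ_def]; exact Measure.isProbabilityMeasure_map hXmeas
  set T : (Fin K → ℝ) × (Fin K → ℝ) → (Fin K → ℝ) × (Fin K → ℝ) :=
    fun p => (p.1, A *ᵥ p.1 + p.2) with hT_def
  have hTcont : Continuous T := by
    rw [hT_def]
    exact continuous_fst.prodMk (((mulVec_continuous' A).comp continuous_fst).add continuous_snd)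
  have hT : Measurable T := hTcont.measurable
  have h1 : P.map (fun ω => (Z s ω, X 0 ω)) = μ.prod ρ := by
    rw [hμ_def, hρ_def]
    exact (indepFun_iff_map_prod_eq_prod_map_map (hZmeas s).aemeasurable hXmeas).mp
      (hindep s 0 hs_pos)
  have h2 : P.map (fun ω => (Z s ω, Y ω)) = μ.prod ν := by
    rw [hμ_def, hν_def]
    exact (indepFun_iff_map_prod_eq_prod_map_map (hZmeas s).aemeasurable
      hYmeas.aemeasurable).mp hZYindep
  have h3 : μ.prod ρ = (μ.prod ν).map T := by
    rw [← h1, ← h2]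
    have e1 : P.map (fun ω => (Z s ω, X 0 ω))
        = P.map (fun ω => (Z s ω, A *ᵥ Z s ω + Y ω)) := by
      apply Measure.map_congr
      filter_upwards [hXeq] with ω h
      rw [h]
    rw [e1, Measure.map_map hT ((hZmeas s).prodMk hYmeas)]
    rfl
  -- characteristic function identity
  have key : ∀ u v : Fin K → ℝ,
      mvCF μ v * mvCF ρ u = mvCF μ (v + Aᵀ *ᵥ u) * mvCF ν u := by
    intro u v
    have lhs := integral_prod_mul (μ := μ) (ν := ρ)
      (fun x => Complex.exp (((v ⬝ᵥ x : ℝ) : ℂ) * Complex.I))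
      (fun x => Complex.exp (((u ⬝ᵥ x : ℝ) : ℂ) * Complex.I))
    have rhs := integral_prod_mul (μ := μ) (ν := ν)
      (fun x => Complex.exp ((((v + Aᵀ *ᵥ u) ⬝ᵥ x : ℝ) : ℂ) * Complex.I))
      (fun x => Complex.exp (((u ⬝ᵥ x : ℝ) : ℂ) * Complex.I))
    have hcont : Continuous fun p : (Fin K → ℝ) × (Fin K → ℝ) =>
        Complex.exp (((v ⬝ᵥ p.1 : ℝ) : ℂ) * Complex.I)
          * Complex.exp (((u ⬝ᵥ p.2 : ℝ) : ℂ) * Complex.I) :=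
      ((eC_continuous.comp ((dotP_continuous v).comp continuous_fst)).mul
        (eC_continuous.comp ((dotP_continuous u).comp continuous_snd)))
    calc mvCF μ v * mvCF ρ u
        = ∫ p : (Fin K → ℝ) × (Fin K → ℝ),
            Complex.exp (((v ⬝ᵥ p.1 : ℝ) : ℂ) * Complex.I)
              * Complex.exp (((u ⬝ᵥ p.2 : ℝ) : ℂ) * Complex.I) ∂(μ.prod ρ) := lhs.symm
      _ = ∫ p : (Fin K → ℝ) × (Fin K → ℝ),
            Complex.exp (((v ⬝ᵥ p.1 : ℝ) : ℂ) * Complex.I)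
              * Complex.exp (((u ⬝ᵥ p.2 : ℝ) : ℂ) * Complex.I) ∂((μ.prod ν).map T) := by
          rw [h3]
      _ = ∫ p : (Fin K → ℝ) × (Fin K → ℝ),
            Complex.exp (((v ⬝ᵥ p.1 : ℝ) : ℂ) * Complex.I)
              * Complex.exp (((u ⬝ᵥ (A *ᵥ p.1 + p.2) : ℝ) : ℂ) * Complex.I) ∂(μ.prod ν) :=
          integral_map hT.aemeasurable hcont.aestronglyMeasurable
      _ = ∫ p : (Fin K → ℝ) × (Fin K → ℝ),
            Complex.exp ((((v + Aᵀ *ᵥ u) ⬝ᵥ p.1 : ℝ) : ℂ) * Complex.I)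
              * Complex.exp (((u ⬝ᵥ p.2 : ℝ) : ℂ) * Complex.I) ∂(μ.prod ν) :=
          integral_congr_ae (ae_of_all _ fun p => exp_reassoc A u v p.1 p.2)
      _ = mvCF μ (v + Aᵀ *ᵥ u) * mvCF ν u := rhs
  have key2 : ∀ u : Fin K → ℝ, mvCF ν u ≠ 0 →
      ∀ v, mvCF μ (v + Aᵀ *ᵥ u) = mvCF μ v * mvCF μ (Aᵀ *ᵥ u) := by
    intro u hu v
    have k1 := key u v
    have k0 := key u 0
    rw [mvCF_zero, one_mul, zero_add] at k0
    rw [k0] at k1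
    apply mul_right_cancel₀ hu
    rw [← k1]
    ring
  -- nonvanishing ball for mvCF ν
  obtain ⟨ε, hε, hball⟩ : ∃ ε > 0, ∀ u : Fin K → ℝ, dist u 0 < ε → mvCF ν u ≠ 0 := by
    have h0 : mvCF ν 0 = 1 := mvCF_zero ν
    have := ((mvCF_continuous ν).continuousAt (x := 0)).eventually_ne
      (by rw [h0]; exact one_ne_zero)
    rw [Metric.eventually_nhds_iff] at this
    obtain ⟨ε, hε, h⟩ := this
    exact ⟨ε, hε, fun u hu => h hu⟩
  -- main claim : Aᵀ *ᵥ u₀ = 0 for all u₀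
  suffices hb : ∀ u₀ : Fin K → ℝ, Aᵀ *ᵥ u₀ = 0 by
    ext j k
    have h := congrFun (hb (Pi.single j 1)) k
    simpa [Matrix.mulVec_single, Matrix.transpose_apply] using h
  intro u₀
  set b : Fin K → ℝ := Aᵀ *ᵥ u₀ with hb_def
  set δ : ℝ := ε / (‖u₀‖ + 1) with hδ_def
  have hnorm_pos : (0 : ℝ) < ‖u₀‖ + 1 := by positivity
  have hδ : 0 < δ := div_pos hε hnorm_pos
  have hconst : ∀ t : ℝ, 0 < t → t < δ →
      ∀ᵐ x ∂μ, Complex.exp (((t * (b ⬝ᵥ x) : ℝ) : ℂ) * Complex.I) = mvCF μ (t • b) := by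
    intro t ht htδ
    have hsm : Aᵀ *ᵥ (t • u₀) = t • b := by rw [Matrix.mulVec_smul, hb_def]
    have hne : mvCF ν (t • u₀) ≠ 0 := by
      apply hball
      rw [dist_zero_right, norm_smul, Real.norm_eq_abs, abs_of_pos ht]
      calc t * ‖u₀‖ ≤ t * (‖u₀‖ + 1) :=
            mul_le_mul_of_nonneg_left (by linarith) ht.le
        _ < δ * (‖u₀‖ + 1) := by
            exact mul_lt_mul_of_pos_right htδ hnorm_pos
        _ = ε := by rw [hδ_def]; field_simp
    have h := key2 (t • u₀) hne
    rw [hsm] at h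
    have hae := mvCF_exp_ae_const μ (t • b) h
    filter_upwards [hae] with x hx
    rw [← hx]
    congr 2
    simp [smul_dotProduct, smul_eq_mul]
  -- two incommensurable scales
  have hsqrt2_pos : (0 : ℝ) < Real.sqrt 2 := Real.sqrt_pos.mpr (by norm_num)
  have hsqrt2_gt1 : (1 : ℝ) < Real.sqrt 2 := by
    rw [show (1 : ℝ) = Real.sqrt 1 by simp]
    exact Real.sqrt_lt_sqrt (by norm_num) (by norm_num)
  set t₁ : ℝ := δ / 2 with ht₁_def
  set t₂ : ℝ := δ / (2 * Real.sqrt 2) with ht₂_def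
  have ht₁_pos : 0 < t₁ := by rw [ht₁_def]; positivity
  have ht₂_pos : 0 < t₂ := by rw [ht₂_def]; positivity
  have ht₁_lt : t₁ < δ := by rw [ht₁_def]; linarith
  have ht₂_lt : t₂ < δ := by
    rw [ht₂_def]
    apply div_lt_self hδ
    nlinarith
  have ht12 : t₁ = t₂ * Real.sqrt 2 := by
    rw [ht₁_def, ht₂_def]
    field_simp
  have h₁ := hconst t₁ ht₁_pos ht₁_lt
  have h₂ := hconst t₂ ht₂_pos ht₂_lt
  haveI : (ae μ).NeBot := ae_neBot.mpr (IsProbabilityMeasure.ne_zero μ)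
  obtain ⟨x₀, hx₀1, hx₀2⟩ := (h₁.and h₂).exists
  set w₀ : ℝ := b ⬝ᵥ x₀ with hw₀_def
  have hconstdot : ∀ᵐ x ∂μ, b ⬝ᵥ x = w₀ := by
    filter_upwards [h₁, h₂] with x hx1 hx2
    by_contra hne
    have e1 : Complex.exp (((t₁ * (b ⬝ᵥ x) : ℝ) : ℂ) * Complex.I)
        = Complex.exp (((t₁ * w₀ : ℝ) : ℂ) * Complex.I) := by rw [hx1, hx₀1]
    have e2 : Complex.exp (((t₂ * (b ⬝ᵥ x) : ℝ) : ℂ) * Complex.I)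
        = Complex.exp (((t₂ * w₀ : ℝ) : ℂ) * Complex.I) := by rw [hx2, hx₀2]
    rw [Complex.exp_eq_exp_iff_exists_int] at e1 e2
    obtain ⟨m, hm⟩ := e1
    obtain ⟨n, hn⟩ := e2
    have hmr : t₁ * (b ⬝ᵥ x) = t₁ * w₀ + (m : ℝ) * (2 * Real.pi) := by
      have := congrArg Complex.im hm
      simpa using this
    have hnr : t₂ * (b ⬝ᵥ x) = t₂ * w₀ + (n : ℝ) * (2 * Real.pi) := by
      have := congrArg Complex.im hn
      simpa using this
    set d : ℝ := b ⬝ᵥ x - w₀ with hd_def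
    have hd : d ≠ 0 := sub_ne_zero.mpr hne
    have f1 : t₁ * d = (m : ℝ) * (2 * Real.pi) := by rw [hd_def]; linear_combination hmr
    have f2 : t₂ * d = (n : ℝ) * (2 * Real.pi) := by rw [hd_def]; linear_combination hnr
    have hm0 : (m : ℝ) ≠ 0 := by
      intro h0
      have : t₁ * d ≠ 0 := mul_ne_zero (ne_of_gt ht₁_pos) hd
      rw [f1, h0] at this
      simp at this
    have hn0 : (n : ℝ) ≠ 0 := by
      intro h0
      have : t₂ * d ≠ 0 := mul_ne_zero (ne_of_gt ht₂_pos) hd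
      rw [f2, h0] at this
      simp at this
    have hpi : (2 : ℝ) * Real.pi ≠ 0 := by
      have := Real.pi_pos
      positivity
    have hmn : (m : ℝ) * (2 * Real.pi) = Real.sqrt 2 * ((n : ℝ) * (2 * Real.pi)) := by
      rw [← f1, ← f2, ht12]
      ring
    have hmn' : (m : ℝ) = Real.sqrt 2 * (n : ℝ) := by
      apply mul_right_cancel₀ hpi
      linear_combination hmn
    have hrel : Real.sqrt 2 = (m : ℝ) / (n : ℝ) := by
      rw [hmn']
      field_simp
    exact irrational_sqrt_two ⟨(m : ℚ) / (n : ℚ), by push_cast; rw [hrel]⟩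
  -- pull back to Ω
  have haeP : ∀ᵐ ω ∂P, b ⬝ᵥ (Z s ω) = w₀ := by
    have hmeasset : MeasurableSet {x : Fin K → ℝ | b ⬝ᵥ x = w₀} :=
      (dotP_measurable b) (measurableSet_singleton w₀)
    have h' : ∀ᵐ x ∂(P.map (Z s)), b ⬝ᵥ x = w₀ := by rw [← hμ_def]; exact hconstdot
    exact (ae_map_iff (hZmeas s).aemeasurable hmeasset).mp h'
  -- moments
  have hdiag : ∀ i, 0 < S i i := by
    intro i
    have hsingle : (Pi.single i 1 : Fin K → ℝ) ≠ 0 := by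
      intro h
      have := congrFun h i
      simp at this
    have := hS.dotProduct_mulVec_pos hsingle
    simpa [single_dotProduct, Matrix.mulVec_single] using this
  have hsq_int : ∀ i, Integrable (fun ω => Z s ω i * Z s ω i) P := by
    intro i
    by_contra hni
    have := hcov s i i
    rw [integral_undef hni] at this
    exact absurd this.symm (ne_of_gt (hdiag i))
  have hmeas_i : ∀ i, Measurable fun ω => Z s ω i := fun i =>
    (measurable_pi_apply i).comp (hZmeas s)
  have hprod_int : ∀ i j, Integrable (fun ω => Z s ω i * Z s ω j) P := by
    intro i j
    refine Integrable.mono' (((hsq_int i).add (hsq_int j)).div_const 2)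
      ((hmeas_i i).mul (hmeas_i j)).aestronglyMeasurable (ae_of_all _ fun ω => ?_)
    rw [Real.norm_eq_abs, abs_mul]
    simp only [Pi.add_apply]
    nlinarith [sq_nonneg (|Z s ω i| - |Z s ω j|), sq_abs (Z s ω i), sq_abs (Z s ω j),
      abs_nonneg (Z s ω i), abs_nonneg (Z s ω j)]
  have hint_i : ∀ i, Integrable (fun ω => Z s ω i) P := by
    intro i
    refine Integrable.mono' (((hsq_int i).add (integrable_const 1)).div_const 2)
      (hmeas_i i).aestronglyMeasurable (ae_of_all _ fun ω => ?_)
    rw [Real.norm_eq_abs]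
    simp only [Pi.add_apply]
    nlinarith [sq_nonneg (|Z s ω i| - 1), sq_abs (Z s ω i), abs_nonneg (Z s ω i)]
  have hEW : ∫ ω, b ⬝ᵥ (Z s ω) ∂P = 0 := by
    have hrw : (fun ω => b ⬝ᵥ (Z s ω)) = fun ω => ∑ i, b i * Z s ω i := rfl
    rw [hrw, integral_finset_sum _ fun i _ => (hint_i i).const_mul (b i)]
    refine Finset.sum_eq_zero fun i _ => ?_
    rw [integral_const_mul, hmean s i, mul_zero]
  have hEW' : ∫ ω, b ⬝ᵥ (Z s ω) ∂P = w₀ := by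
    rw [integral_congr_ae (haeP.mono fun ω h => h)]
    simp
  have hw₀ : w₀ = 0 := hEW'.symm.trans hEW
  have hq : b ⬝ᵥ (S *ᵥ b) = 0 := by
    have hzero : ∫ ω, (b ⬝ᵥ Z s ω) * (b ⬝ᵥ Z s ω) ∂P = 0 := by
      have hae0 : ∀ᵐ ω ∂P, (b ⬝ᵥ Z s ω) * (b ⬝ᵥ Z s ω) = 0 :=
        haeP.mono fun ω h => by rw [h, hw₀, mul_zero]
      rw [integral_congr_ae hae0, integral_zero]
    have hexp : ∫ ω, (b ⬝ᵥ Z s ω) * (b ⬝ᵥ Z s ω) ∂P = b ⬝ᵥ (S *ᵥ b) := by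
      have hpt : ∀ ω, (b ⬝ᵥ Z s ω) * (b ⬝ᵥ Z s ω)
          = ∑ i, ∑ j, (b i * b j) * (Z s ω i * Z s ω j) := by
        intro ω
        rw [show b ⬝ᵥ Z s ω = ∑ i, b i * Z s ω i from rfl, Finset.sum_mul_sum]
        refine Finset.sum_congr rfl fun i _ => Finset.sum_congr rfl fun j _ => by ring
      rw [integral_congr_ae (ae_of_all _ hpt),
        integral_finset_sum _ fun i _ =>
          integrable_finset_sum _ fun j _ => (hprod_int i j).const_mul _]
      have : ∀ i : Fin K, ∫ ω, ∑ j, (b i * b j) * (Z s ω i * Z s ω j) ∂P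
          = ∑ j, (b i * b j) * S i j := by
        intro i
        rw [integral_finset_sum _ fun j _ => (hprod_int i j).const_mul _]
        exact Finset.sum_congr rfl fun j _ => by rw [integral_const_mul, hcov s i j]
      rw [Finset.sum_congr rfl fun i _ => this i]
      rw [show b ⬝ᵥ (S *ᵥ b) = ∑ i, b i * ∑ j, S i j * b j from rfl]
      refine Finset.sum_congr rfl fun i _ => ?_
      rw [Finset.mul_sum]
      exact Finset.sum_congr rfl fun j _ => by ring
    rw [← hexp, hzero]
  by_contra hbne
  have hpos := hS.dotProduct_mulVec_pos hbne
  rw [show star b = b from star_trivial b] at hpos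
  rw [hq] at hpos
  exact lt_irrefl 0 hpos
end

section
/- Let (Z_t)_{t∈ℤ} be an i.i.d. sequence of random vectors in ℝ^K with mean zero and finite covariance, let Φ be a real K×K matrix all of whose complex eigenvalues have modulus strictly less than 1, and suppose X_t := ∑_{j=0}^∞ Φ^j Z_{t−j} converges almost surely and in L², so that X_t = ΦX_{t−1} + Z_t. Assume Γ₀ := E[X_t X_tᵀ] is invertible, set C₁ := E[X_t X_{t+1}ᵀ] and define Z̃_t := X_t − C₁Γ₀⁻¹ X_{t+1}. Then for every integer k ≥ 1, E[Z̃_t X_{t+k}ᵀ] = 0, i.e. the backward residual Z̃_t is uncorrelated with every future value X_{t+k}. -/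
open MeasureTheory ProbabilityTheory Filter Matrix
open scoped ENNReal

private lemma aux_int_mul {Ω : Type*} [MeasurableSpace Ω] {P : Measure Ω} {f g : Ω → ℝ}
    (hf : MemLp f 2 P) (hg : MemLp g 2 P) : Integrable (fun ω => f ω * g ω) P := by
  have h : (1 : ℝ≥0∞) / 1 = 1 / 2 + 1 / 2 := by
    rw [ENNReal.div_add_div_same]
    norm_num
    rw [ENNReal.div_self] <;> norm_num
  have := hg.smul (r := 1) hf
  rw [memLp_one_iff_integrable] at this
  exact this

/-- For a causal VAR(1) process `X t = Φ *ᵥ X (t-1) + Z t` with i.i.d. mean-zero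
square-integrable innovations and invertible `Γ₀ = E[X_t X_tᵀ]`, the backward residual
`Z̃ t = X t - C₁ Γ₀⁻¹ X (t+1)` (with `C₁ = E[X_t X_{t+1}ᵀ]`) is uncorrelated with every future
value `X (t+k)`, `k ≥ 1`. -/
theorem backward_residual_uncorrelated_with_future
    {Ω : Type*} [MeasurableSpace Ω] (P : Measure Ω) [IsProbabilityMeasure P]
    (K : ℕ) (Z : ℤ → Ω → (Fin K → ℝ))
    (hZmeas : ∀ t, Measurable (Z t))
    (hZindep : iIndepFun Z P)
    (hZident : ∀ s t : ℤ, P.map (Z s) = P.map (Z t))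
    (hmean : ∀ t i, ∫ ω, Z t ω i ∂P = 0)
    (hZL2 : ∀ t i, MemLp (fun ω => Z t ω i) 2 P)
    (Φ : Matrix (Fin K) (Fin K) ℝ)
    (heig : ∀ z : ℂ,
      (z • (1 : Matrix (Fin K) (Fin K) ℂ) - Φ.map (Complex.ofReal : ℝ → ℂ)).det = 0 → ‖z‖ < 1)
    (X : ℤ → Ω → (Fin K → ℝ))
    (hXmeas : ∀ t, Measurable (X t))
    (hconv : ∀ t : ℤ, ∀ᵐ ω ∂P,
      Tendsto (fun n => ∑ j ∈ Finset.range n, (Φ ^ j) *ᵥ (Z (t - (j : ℤ)) ω))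
        atTop (nhds (X t ω)))
    (hconvL2 : ∀ (t : ℤ) (i : Fin K),
      Tendsto (fun n =>
          eLpNorm (fun ω => X t ω i - (∑ j ∈ Finset.range n, (Φ ^ j) *ᵥ (Z (t - (j : ℤ)) ω)) i)
            2 P)
        atTop (nhds 0))
    (hrec : ∀ t : ℤ, ∀ᵐ ω ∂P, X t ω = Φ *ᵥ (X (t - 1) ω) + Z t ω)
    (hstat : ∀ (t k : ℤ) (i j : Fin K),
      ∫ ω, X t ω i * X (t + k) ω j ∂P = ∫ ω, X 0 ω i * X k ω j ∂P)
    (Γ₀ C₁ : Matrix (Fin K) (Fin K) ℝ)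
    (hΓ₀ : ∀ i j, Γ₀ i j = ∫ ω, X 0 ω i * X 0 ω j ∂P)
    (hΓ₀inv : IsUnit Γ₀)
    (hC₁ : ∀ i j, C₁ i j = ∫ ω, X 0 ω i * X 1 ω j ∂P) :
    ∀ (t k : ℤ), 1 ≤ k → ∀ (i j : Fin K),
      ∫ ω, (X t ω - (C₁ * Γ₀⁻¹) *ᵥ (X (t + 1) ω)) i * X (t + k) ω j ∂P = 0 := by
  classical
  have hXm : ∀ (t : ℤ) (i : Fin K), Measurable (fun ω => X t ω i) :=
    fun t i => (measurable_pi_apply i).comp (hXmeas t)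
  have hZm : ∀ (t : ℤ) (i : Fin K), Measurable (fun ω => Z t ω i) :=
    fun t i => (measurable_pi_apply i).comp (hZmeas t)
  -- partial sums, coordinatewise
  set S : ℤ → ℕ → Ω → Fin K → ℝ :=
    fun t n ω => ∑ j ∈ Finset.range n, (Φ ^ j) *ᵥ (Z (t - (j : ℤ)) ω) with hSdef
  have hSm : ∀ (t : ℤ) (n : ℕ) (i : Fin K), Measurable (fun ω => S t n ω i) := by
    intro t n i
    simp only [hSdef, Finset.sum_apply, Matrix.mulVec, dotProduct]
    exact Finset.measurable_sum _ fun jj _ =>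
      Finset.measurable_sum _ fun l _ => (hZm _ l).const_mul _
  have hSL2 : ∀ (t : ℤ) (n : ℕ) (i : Fin K), MemLp (fun ω => S t n ω i) 2 P := by
    intro t n i
    have heq : (fun ω => S t n ω i)
        = ∑ jj ∈ Finset.range n, ∑ l : Fin K,
            (fun ω => (Φ ^ jj) i l * Z (t - (jj : ℤ)) ω l) := by
      ext ω
      simp [hSdef, Finset.sum_apply, Matrix.mulVec, dotProduct]
    rw [heq]
    exact memLp_finset_sum' _ fun jj _ =>
      memLp_finset_sum' _ fun l _ => (hZL2 _ l).const_mul _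
  have hconvL2' : ∀ (t : ℤ) (i : Fin K),
      Tendsto (fun n => eLpNorm (fun ω => X t ω i - S t n ω i) 2 P) atTop (nhds 0) :=
    fun t i => hconvL2 t i
  -- each coordinate of X is in L²
  have hXL2 : ∀ (t : ℤ) (i : Fin K), MemLp (fun ω => X t ω i) 2 P := by
    intro t i
    obtain ⟨n, hn⟩ : ∃ n, eLpNorm (fun ω => X t ω i - S t n ω i) 2 P < ⊤ := by
      have h := (hconvL2' t i).eventually_lt_const (by norm_num : (0 : ℝ≥0∞) < 1)
      obtain ⟨n, hn⟩ := h.exists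
      exact ⟨n, hn.trans (by norm_num)⟩
    have hdiff : MemLp (fun ω => X t ω i - S t n ω i) 2 P :=
      ⟨((hXm t i).sub (hSm t n i)).aestronglyMeasurable, hn⟩
    have := hdiff.add (hSL2 t n i)
    have heq : ((fun ω => X t ω i - S t n ω i) + fun ω => S t n ω i) = fun ω => X t ω i := by
      ext ω; simp
    rwa [heq] at this
  -- products are integrable
  have hXXint : ∀ (s u : ℤ) (i j : Fin K),
      Integrable (fun ω => X s ω i * X u ω j) P :=
    fun s u i j => aux_int_mul (hXL2 s i) (hXL2 u j)
  -- E[Z_s,l Z_u,j] = 0 for s ≠ u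
  have hZZ : ∀ (s u : ℤ), s ≠ u → ∀ (l j : Fin K), ∫ ω, Z s ω l * Z u ω j ∂P = 0 := by
    intro s u hsu l j
    have hind : IndepFun (fun ω => Z s ω l) (fun ω => Z u ω j) P :=
      (hZindep.indepFun hsu).comp (measurable_pi_apply l) (measurable_pi_apply j)
    have h := hind.integral_mul_eq_mul_integral (hZm s l).aestronglyMeasurable (hZm u j).aestronglyMeasurable
    simpa [Pi.mul_apply, hmean] using h
  -- E[X_t,i Z_u,j] = 0 for t < u
  have hXZ : ∀ (t u : ℤ), t < u → ∀ (i j : Fin K), ∫ ω, X t ω i * Z u ω j ∂P = 0 := by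
    intro t u htu i j
    have hSZint : ∀ (n : ℕ), Integrable (fun ω => S t n ω i * Z u ω j) P :=
      fun n => aux_int_mul (hSL2 t n i) (hZL2 u j)
    have hSZ : ∀ n : ℕ, ∫ ω, S t n ω i * Z u ω j ∂P = 0 := by
      intro n
      have heq : (fun ω => S t n ω i * Z u ω j)
          = fun ω => ∑ jj ∈ Finset.range n, ∑ l : Fin K,
              (Φ ^ jj) i l * (Z (t - (jj : ℤ)) ω l * Z u ω j) := by
        ext ω
        simp [hSdef, Finset.sum_apply, Matrix.mulVec, dotProduct, Finset.sum_mul,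
          mul_assoc]
      rw [heq]
      have hint1 : ∀ (jj : ℕ) (l : Fin K),
          Integrable (fun ω => (Φ ^ jj) i l * (Z (t - (jj : ℤ)) ω l * Z u ω j)) P :=
        fun jj l => (aux_int_mul (hZL2 _ l) (hZL2 u j)).const_mul _
      rw [integral_finset_sum _ (fun jj _ => integrable_finset_sum _ fun l _ => hint1 jj l)]
      refine Finset.sum_eq_zero fun jj _ => ?_
      rw [integral_finset_sum _ (fun l _ => hint1 jj l)]
      refine Finset.sum_eq_zero fun l _ => ?_
      rw [integral_const_mul, hZZ (t - (jj : ℤ)) u (by omega) l j, mul_zero]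
    -- L¹ convergence of S_n * Z to X * Z
    have hZne : eLpNorm (fun ω => Z u ω j) 2 P ≠ ⊤ := (hZL2 u j).eLpNorm_ne_top
    have hbound : ∀ n : ℕ,
        (∫⁻ ω, ‖S t n ω i * Z u ω j - X t ω i * Z u ω j‖ₑ ∂P)
          ≤ eLpNorm (fun ω => X t ω i - S t n ω i) 2 P * eLpNorm (fun ω => Z u ω j) 2 P := by
      intro n
      rw [← eLpNorm_one_eq_lintegral_enorm]
      have heq : (fun ω => S t n ω i * Z u ω j - X t ω i * Z u ω j)
          = -((fun ω => X t ω i - S t n ω i) • (fun ω => Z u ω j)) := by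
        ext ω
        simp [smul_eq_mul]
        ring
      rw [heq, eLpNorm_neg]
      exact eLpNorm_smul_le_mul_eLpNorm (hZm u j).aestronglyMeasurable
        ((hXm t i).sub (hSm t n i)).aestronglyMeasurable
    have htend0 : Tendsto
        (fun n => ∫⁻ ω, ‖S t n ω i * Z u ω j - X t ω i * Z u ω j‖ₑ ∂P) atTop (nhds 0) := by
      have hmul : Tendsto
          (fun n => eLpNorm (fun ω => X t ω i - S t n ω i) 2 P
            * eLpNorm (fun ω => Z u ω j) 2 P) atTop (nhds 0) := by
        have := ENNReal.Tendsto.mul_const (hconvL2' t i) (Or.inr hZne)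
        simpa using this
      exact tendsto_of_tendsto_of_tendsto_of_le_of_le tendsto_const_nhds hmul
        (fun n => zero_le) hbound
    have hlim := tendsto_integral_of_L1 (μ := P)
      (fun ω => X t ω i * Z u ω j) (aux_int_mul (hXL2 t i) (hZL2 u j)).aestronglyMeasurable
      (Eventually.of_forall hSZint) htend0
    have hlim0 : Tendsto (fun n : ℕ => ∫ ω, S t n ω i * Z u ω j ∂P) atTop (nhds 0) := by
      simpa [hSZ] using tendsto_const_nhds (α := ℝ) (x := (0:ℝ)) (f := atTop (α := ℕ))
    exact (tendsto_nhds_unique hlim hlim0)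
  -- autocovariance matrices
  set C : ℕ → Matrix (Fin K) (Fin K) ℝ :=
    fun m => Matrix.of fun i j => ∫ ω, X 0 ω i * X (m : ℤ) ω j ∂P with hCdef
  have hCstep : ∀ m : ℕ, C (m + 1) = C m * Φᵀ := by
    intro m
    ext i j
    have hrec' := hrec ((m : ℤ) + 1)
    have hm1 : ((m : ℤ) + 1) - 1 = (m : ℤ) := by ring
    rw [hm1] at hrec'
    have hae : (fun ω => X 0 ω i * X ((m : ℤ) + 1) ω j)
        =ᵐ[P] fun ω => (∑ l : Fin K, Φ j l * (X 0 ω i * X (m : ℤ) ω l))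
          + X 0 ω i * Z ((m : ℤ) + 1) ω j := by
      filter_upwards [hrec'] with ω hω
      rw [hω]
      simp [Matrix.mulVec, dotProduct, Finset.mul_sum, mul_add]
      exact Finset.sum_congr rfl fun l _ => by ring
    have h1 : (C (m+1)) i j = ∫ ω, ((∑ l : Fin K, Φ j l * (X 0 ω i * X (m : ℤ) ω l))
          + X 0 ω i * Z ((m : ℤ) + 1) ω j) ∂P := by
      have hcast : ((m + 1 : ℕ) : ℤ) = (m : ℤ) + 1 := by push_cast; ring
      simp only [hCdef, Matrix.of_apply, hcast]
      exact integral_congr_ae hae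
    rw [h1, integral_add (integrable_finset_sum _ fun l _ => (hXXint 0 (m : ℤ) i l).const_mul _)
      (aux_int_mul (hXL2 0 i) (hZL2 _ j)),
      hXZ 0 ((m : ℤ) + 1) (by omega) i j, add_zero,
      integral_finset_sum _ (fun l _ => (hXXint 0 (m : ℤ) i l).const_mul _)]
    simp only [integral_const_mul]
    rw [Matrix.mul_apply]
    simp only [hCdef, Matrix.of_apply, Matrix.transpose_apply]
    exact Finset.sum_congr rfl fun l _ => by ring
  have hC0 : C 0 = Γ₀ := by
    ext i j
    simp only [hCdef, Matrix.of_apply, hΓ₀]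
    norm_num
  have hCpow : ∀ m : ℕ, C m = Γ₀ * Φᵀ ^ m := by
    intro m
    induction m with
    | zero => simpa using hC0
    | succ n ih => rw [hCstep n, ih, pow_succ, mul_assoc]
  have hC1 : C₁ = Γ₀ * Φᵀ := by
    have : C 1 = Γ₀ * Φᵀ := by rw [hCpow 1, pow_one]
    rw [← this]
    ext i j
    simp [hCdef, hC₁]
  -- the matrix identity
  have hmatkey : ∀ m : ℕ, (C₁ * Γ₀⁻¹) * C m = C (m + 1) := by
    intro m
    rw [hC1, hCpow m, hCpow (m + 1)]
    have hinv : Γ₀⁻¹ * Γ₀ = 1 :=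
      Matrix.nonsing_inv_mul Γ₀ ((Matrix.isUnit_iff_isUnit_det Γ₀).mp hΓ₀inv)
    calc Γ₀ * Φᵀ * Γ₀⁻¹ * (Γ₀ * Φᵀ ^ m)
        = Γ₀ * Φᵀ * (Γ₀⁻¹ * Γ₀) * Φᵀ ^ m := by simp only [mul_assoc]
      _ = Γ₀ * Φᵀ ^ (m + 1) := by rw [hinv, mul_one, pow_succ', mul_assoc]
  -- main computation
  intro t k hk i j
  obtain ⟨m, rfl⟩ : ∃ m : ℕ, k = (m : ℤ) + 1 := ⟨(k - 1).toNat, by omega⟩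
  have heq : (fun ω => (X t ω - (C₁ * Γ₀⁻¹) *ᵥ (X (t + 1) ω)) i * X (t + ((m : ℤ) + 1)) ω j)
      = fun ω => X t ω i * X (t + ((m : ℤ) + 1)) ω j
        - ∑ l : Fin K, (C₁ * Γ₀⁻¹) i l * (X (t + 1) ω l * X (t + ((m : ℤ) + 1)) ω j) := by
    ext ω
    simp [Matrix.mulVec, dotProduct, sub_mul, Finset.sum_mul, mul_assoc]
  rw [heq, integral_sub (hXXint t _ i j)
    (integrable_finset_sum _ fun l _ => (hXXint (t + 1) _ l j).const_mul _),
    integral_finset_sum _ (fun l _ => (hXXint (t + 1) _ l j).const_mul _)]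
  simp only [integral_const_mul]
  have e1 : ∫ ω, X t ω i * X (t + ((m : ℤ) + 1)) ω j ∂P = C (m + 1) i j := by
    rw [hstat t ((m : ℤ) + 1) i j]
    simp only [hCdef, Matrix.of_apply]
    push_cast
    rfl
  have e2 : ∀ l : Fin K, ∫ ω, X (t + 1) ω l * X (t + ((m : ℤ) + 1)) ω j ∂P = C m l j := by
    intro l
    have harg : t + ((m : ℤ) + 1) = (t + 1) + (m : ℤ) := by ring
    rw [harg, hstat (t + 1) (m : ℤ) l j]
    rfl
  rw [e1]
  simp only [e2]
  have := hmatkey m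
  have h2 : ∑ l : Fin K, (C₁ * Γ₀⁻¹) i l * C m l j = ((C₁ * Γ₀⁻¹) * C m) i j :=
    (Matrix.mul_apply).symm
  rw [h2, this, sub_self]
end

section
/- Let K, p, q ≥ 1 and let Φ₁, …, Φ_p, Θ₁, …, Θ_q be K×K matrices over a commutative ring R (e.g. over ℝ or ℂ). Define the K(p+q)×K(p+q) block matrix Υ = [[Υ₁₁, Υ₁₂], [0, Υ₂₂]], where: Υ₁₁ is the Kp×Kp block matrix whose first block row is (Φ₁, Φ₂, …, Φ_p), with K×K identity blocks on the block subdiagonal and zero blocks elsewhere; Υ₁₂ is the Kp×Kq block matrix whose first block row is (Θ₁, …, Θ_q) and whose remaining blocks are zero; and Υ₂₂ is the Kq×Kq block matrix with K×K identity blocks on the block subdiagonal and zero blocks elsewhere. Then for every z ∈ R: det(1_{K(p+q)} − zΥ) = det(1_K − zΦ₁ − z²Φ₂ − ⋯ − z^pΦ_p). -/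
open Matrix

/-- The companion coefficient matrix `Υ` of the VAR(1) representation of a `K`-dimensional
VARMA(p,q) process, as a `K(p+q) × K(p+q)` matrix indexed by block index in `Fin (p+q)` and
within-block index in `Fin K`.  Block row `0` is `(Φ₁, …, Φ_p, Θ₁, …, Θ_q)`; block rows
`1, …, p-1` and `p+1, …, p+q-1` carry `K × K` identity blocks on the block subdiagonal;
all other blocks (in particular all of block row `p`, the first block row of `Υ₂₂`, and the
lower-left block) are zero. -/
def varmaCompanion (R : Type*) [CommRing R] (K p q : ℕ)
    (Φ : Fin p → Matrix (Fin K) (Fin K) R) (Θ : Fin q → Matrix (Fin K) (Fin K) R) :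
    Matrix (Fin (p + q) × Fin K) (Fin (p + q) × Fin K) R :=
  fun a b =>
    if a.1.val = 0 then
      (if h : b.1.val < p then Φ ⟨b.1.val, h⟩ a.2 b.2
       else Θ ⟨b.1.val - p, by have := b.1.isLt; omega⟩ a.2 b.2)
    else if a.1.val ≠ p ∧ b.1.val + 1 = a.1.val then (if a.2 = b.2 then 1 else 0)
    else 0

lemma sum_dite_lt {R : Type*} [CommRing R] {p q : ℕ} (f : Fin p → R) :
    ∑ b : Fin (p + q), (if h : b.1 < p then f ⟨b.1, h⟩ else 0) = ∑ m : Fin p, f m := by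
  rw [Fin.sum_univ_add]
  simp

lemma det_blockTriangular_fst {R : Type*} [CommRing R] {n K : ℕ} (hK : 0 < K)
    (P : Matrix (Fin n × Fin K) (Fin n × Fin K) R) (h : P.BlockTriangular Prod.fst) :
    P.det = ∏ a : Fin n, Matrix.det (Matrix.of fun i j : Fin K => P (a, i) (a, j)) := by
  rw [h.det]
  have himg : (Finset.image (Prod.fst : Fin n × Fin K → Fin n) Finset.univ) = Finset.univ :=
    Finset.eq_univ_of_forall fun a => Finset.mem_image.2 ⟨(a, ⟨0, hK⟩), Finset.mem_univ _, rfl⟩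
  rw [himg]
  refine Finset.prod_congr rfl fun a _ => ?_
  rw [← Matrix.det_submatrix_equiv_self
    (⟨fun i => ⟨(a, i), rfl⟩, fun x => x.1.2, fun i => rfl,
      fun x => by rcases x with ⟨⟨b, i⟩, rfl⟩; rfl⟩ :
      Fin K ≃ {x : Fin n × Fin K // x.1 = a})]
  rfl

/-- the block unitriangular matrix used for column operations -/
def compU (R : Type*) [CommRing R] (K p n : ℕ) (z : R) :
    Matrix (Fin n × Fin K) (Fin n × Fin K) R :=
  fun x y => if y.1.1 ≤ x.1.1 ∧ (x.1.1 < p ↔ y.1.1 < p) then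
      (if x.2 = y.2 then z ^ (x.1.1 - y.1.1) else 0) else 0

lemma det_compU {R : Type*} [CommRing R] {K n p : ℕ} (hK : 0 < K) (z : R) :
    (compU R K p n z).det = 1 := by
  rw [← Matrix.det_transpose]
  have htri : (compU R K p n z)ᵀ.BlockTriangular Prod.fst := by
    rintro ⟨⟨xa, hxa⟩, i⟩ ⟨⟨ya, hya⟩, j⟩ hlt
    have h : ya < xa := hlt
    show compU R K p n z _ _ = 0
    rw [compU, if_neg]
    simp only [not_and]
    intro h'
    omega
  rw [det_blockTriangular_fst hK _ htri]
  have hb : ∀ a : Fin n,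
      (Matrix.of fun i j : Fin K => compU R K p n z (a, j) (a, i))
        = (1 : Matrix (Fin K) (Fin K) R) := by
    intro a
    ext i j
    simp [compU, Matrix.one_apply, eq_comm]
  simp [hb]

/-- determinant identity for the VAR(1) companion matrix of a VARMA(p,q) process:
`det (1 - z Υ) = det (1 - z Φ₁ - z² Φ₂ - ⋯ - z^p Φ_p)`. -/
theorem det_one_sub_smul_varmaCompanion
    (R : Type*) [CommRing R] (K p q : ℕ) (hK : 1 ≤ K) (hp : 1 ≤ p) (hq : 1 ≤ q)
    (Φ : Fin p → Matrix (Fin K) (Fin K) R) (Θ : Fin q → Matrix (Fin K) (Fin K) R)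
    (z : R) :
    ((1 : Matrix (Fin (p + q) × Fin K) (Fin (p + q) × Fin K) R)
        - z • varmaCompanion R K p q Φ Θ).det
      = ((1 : Matrix (Fin K) (Fin K) R) - ∑ m : Fin p, z ^ (m.val + 1) • Φ m).det := by
  set A := varmaCompanion R K p q Φ Θ with hAdef
  set U := compU R K p (p + q) z with hUdef
  set M := (1 : Matrix (Fin (p + q) × Fin K) (Fin (p + q) × Fin K) R) - z • A with hMdef
  set y0 : Fin (p + q) := ⟨0, by omega⟩ with hy0
  have hpne : ¬ p = 0 := by omega
  have hMU : ∀ x y, (M * U) x y = U x y - z * ∑ k, A x k * U k y := by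
    intro x y
    rw [Matrix.mul_apply, hMdef]
    simp only [Matrix.sub_apply, Matrix.smul_apply, Matrix.one_apply, smul_eq_mul, sub_mul,
      ite_mul, one_mul, zero_mul, Finset.sum_sub_distrib, Finset.sum_ite_eq,
      Finset.mem_univ, if_true, mul_assoc, Finset.mul_sum]
  -- row 0 of A times U, at column block 0
  have hT0 : ∀ (x1 : Fin (p + q)) (i j : Fin K), (x1 : ℕ) = 0 →
      ∑ k, A (x1, i) k * U k (y0, j) = ∑ m : Fin p, z ^ m.1 * Φ m i j := by
    intro x1 i j hx
    rw [Fintype.sum_prod_type]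
    have hinner : ∀ b : Fin (p + q), (∑ l : Fin K, A (x1, i) (b, l) * U (b, l) (y0, j))
        = if h : b.1 < p then Φ ⟨b.1, h⟩ i j * z ^ b.1 else 0 := by
      intro b
      by_cases hb : b.1 < p
      · rw [dif_pos hb]
        have hA : ∀ l, A (x1, i) (b, l) = Φ ⟨b.1, hb⟩ i l := by
          intro l; simp [hAdef, varmaCompanion, hx, hb]
        have hU : ∀ l, U (b, l) (y0, j) = if l = j then z ^ b.1 else 0 := by
          intro l; simp [hUdef, compU, hy0, hb, hpne]
        simp only [hA, hU]
        simp [mul_ite, Finset.sum_ite_eq']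
      · rw [dif_neg hb]
        have hU : ∀ l, U (b, l) (y0, j) = 0 := by
          intro l; simp [hUdef, compU, hy0, hb, hpne]
        simp [hU]
    rw [Finset.sum_congr rfl fun b _ => hinner b]
    rw [sum_dite_lt (fun m => Φ m i j * z ^ m.1)]
    exact Finset.sum_congr rfl fun m _ => by ring
  -- rows a with a ≠ 0, a ≠ p
  have hTsub : ∀ (a : Fin (p + q)) (i : Fin K), (a : ℕ) ≠ 0 → (a : ℕ) ≠ p → ∀ y,
      ∑ k, A (a, i) k * U k y = U (⟨(a : ℕ) - 1, by omega⟩, i) y := by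
    intro a i ha hap y
    have hA : ∀ k, A (a, i) k
        = if ((⟨a.1 - 1, by omega⟩ : Fin (p + q)), i) = k then 1 else 0 := by
      rintro ⟨⟨b, hb⟩, l⟩
      have hcond : (((⟨a.1 - 1, by omega⟩ : Fin (p + q)), i)
            = ((⟨b, hb⟩ : Fin (p + q)), l))
          ↔ (b + 1 = a.1 ∧ i = l) := by
        simp only [Prod.ext_iff, Fin.ext_iff]
        constructor
        · rintro ⟨h1, h2⟩; exact ⟨by omega, h2⟩
        · rintro ⟨h1, h2⟩; exact ⟨by omega, h2⟩
      simp only [hAdef, varmaCompanion]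
      rw [if_neg ha]
      simp only [hcond]
      by_cases hbl : b + 1 = a.1 <;> by_cases hil : i = l <;> simp [hap, hbl, hil]
    simp only [hA]
    simp [ite_mul, Finset.sum_ite_eq]
  -- row p
  have hTp : ∀ (a : Fin (p + q)) (i : Fin K), (a : ℕ) = p → ∀ y,
      ∑ k, A (a, i) k * U k y = 0 := by
    intro a i ha y
    have hz : ∀ k, A (a, i) k = 0 := by
      rintro ⟨b, l⟩
      have h0 : (a.1 : ℕ) ≠ 0 := by omega
      simp [hAdef, varmaCompanion, ha, h0, hpne]
    simp [hz]
  -- block triangularity of M * U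
  have htri : (M * U).BlockTriangular Prod.fst := by
    rintro ⟨a, i⟩ ⟨b, j⟩ hlt
    have hxy : (b : ℕ) < (a : ℕ) := hlt
    rw [hMU]
    by_cases hxp : (a : ℕ) = p
    · rw [hTp a i hxp]
      simp only [hUdef, compU, Fin.val_mk]
      rw [if_neg (by simp only [not_and]; intro h h'; omega)]
      ring
    · rw [hTsub a i (by omega) hxp]
      simp only [hUdef, compU, Fin.val_mk]
      split_ifs with h1 h2 h3 h4 <;>
        first
          | (exfalso; omega)
          | (have hE : (a : ℕ) - (b : ℕ) = ((a : ℕ) - 1 - (b : ℕ)) + 1 := by omega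
             rw [hE, pow_succ]; ring)
          | simp
  -- diagonal blocks away from 0
  have hblocks : ∀ a : Fin (p + q), a.1 ≠ 0 →
      (Matrix.of fun i j : Fin K => (M * U) ((a, i)) ((a, j)))
        = (1 : Matrix (Fin K) (Fin K) R) := by
    intro a ha
    ext i j
    show (M * U) (a, i) (a, j) = _
    rw [hMU]
    by_cases hap : (a : ℕ) = p
    · rw [hTp a i hap]
      simp only [hUdef, compU, Fin.val_mk, Matrix.one_apply, Nat.sub_self, pow_zero,
        le_refl, iff_self, and_true, true_and, if_true]
      split_ifs <;> first | (exfalso; omega) | ring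
    · rw [hTsub a i ha hap]
      simp only [hUdef, compU, Fin.val_mk, Matrix.one_apply, Nat.sub_self, pow_zero,
        le_refl, iff_self, and_true, true_and, if_true]
      split_ifs <;> first | (exfalso; omega) | ring
  -- diagonal block at 0
  have hblock0 :
      (Matrix.of fun i j : Fin K => (M * U) ((y0, i)) ((y0, j)))
        = (1 : Matrix (Fin K) (Fin K) R) - ∑ m : Fin p, z ^ (m.val + 1) • Φ m := by
    ext i j
    show (M * U) (y0, i) (y0, j) = _
    rw [hMU, hT0 y0 i j rfl]
    have hmul : z * ∑ m : Fin p, z ^ m.1 * Φ m i j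
        = ∑ m : Fin p, z ^ (m.1 + 1) * Φ m i j := by
      rw [Finset.mul_sum]; exact Finset.sum_congr rfl fun m _ => by ring
    rw [hmul]
    simp [hUdef, compU, Matrix.one_apply, Matrix.sub_apply, Matrix.sum_apply]
  have hdetU : U.det = 1 := det_compU hK z
  calc M.det = M.det * U.det := by rw [hdetU, mul_one]
    _ = (M * U).det := (Matrix.det_mul M U).symm
    _ = ∏ a : Fin (p + q), Matrix.det (Matrix.of fun i j : Fin K => (M * U) ((a, i)) ((a, j))) :=
        det_blockTriangular_fst hK _ htri
    _ = ((1 : Matrix (Fin K) (Fin K) R) - ∑ m : Fin p, z ^ (m.val + 1) • Φ m).det := by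
        rw [Finset.prod_eq_single y0
          (fun b _ hb => by
            rw [hblocks b (by simpa [hy0, Fin.ext_iff] using hb), Matrix.det_one])
          (fun h => absurd (Finset.mem_univ y0) h)]
        rw [hblock0]
end
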